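/- arXiv:2503.09848 — 6 statements merged into one kernel-verified Lean document; each statement's English description precedes it below -/
import Mathlib

section
/- Let σ > 0, let m̄ ∈ ℝ, let K > 0, and define f∞ : (-1,1) → ℝ by f∞(v) = K·(1+v)^(−2+m̄/(2σ²))·(1−v)^(−2−m̄/(2σ²))·exp(−(1−m̄·v)/(σ²·(1−v²))). Then f∞ satisfies the zero-flux stationary equation of the Fokker–Planck equation ∂_t f = −∂_v((m̄−v)f) + (σ²/2)∂²_v((1−v²)²f); that is, for every v ∈ (−1,1), (m̄ − v)·f∞(v) = (σ²/2)·(d/dv)[(1−v²)²·f∞(v)]. In particular f∞ is a stationary solution of this Fokker–Planck equation. -/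
/-- The function `f∞(v) = K (1+v)^(−2+m̄/(2σ²)) (1−v)^(−2−m̄/(2σ²)) exp(−(1−m̄v)/(σ²(1−v²)))`
satisfies the zero-flux stationary equation of the Fokker–Planck equation
`∂_t f = −∂_v((m̄−v)f) + (σ²/2)∂²_v((1−v²)²f)` on `(−1,1)`. -/
theorem stationary_solution_zero_flux
    (σ m K : ℝ) (hσ : 0 < σ) (hK : 0 < K) (f : ℝ → ℝ)
    (hf : ∀ v : ℝ, f v =
      K * (1 + v) ^ (-2 + m / (2 * σ ^ 2)) * (1 - v) ^ (-2 - m / (2 * σ ^ 2)) *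
        Real.exp (-(1 - m * v) / (σ ^ 2 * (1 - v ^ 2)))) :
    ∀ v ∈ Set.Ioo (-1 : ℝ) 1,
      (m - v) * f v = σ ^ 2 / 2 * deriv (fun w => (1 - w ^ 2) ^ 2 * f w) v := by
  intro v hv
  obtain ⟨hv1, hv2⟩ := hv
  have h1 : (0:ℝ) < 1 + v := by linarith
  have h2 : (0:ℝ) < 1 - v := by linarith
  have h12 : (0:ℝ) < 1 - v ^ 2 := by nlinarith
  have hσ2 : (σ:ℝ) ^ 2 ≠ 0 := by positivity
  have hfe : f = fun w => K * (1 + w) ^ (-2 + m / (2 * σ ^ 2)) *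
      (1 - w) ^ (-2 - m / (2 * σ ^ 2)) *
      Real.exp (-(1 - m * w) / (σ ^ 2 * (1 - w ^ 2))) := funext hf
  set c : ℝ := m / (2 * σ ^ 2) with hc
  -- derivatives of the pieces
  have hA : HasDerivAt (fun w : ℝ => (1 + w) ^ (-2 + c))
      ((-2 + c) * (1 + v) ^ (-2 + c - 1)) v := by
    have h : HasDerivAt (fun w : ℝ => (1 + w) ^ (-2 + c)) _ v := (Real.hasDerivAt_rpow_const (x := 1 + v) (p := -2 + c)
      (Or.inl h1.ne')).comp v ((hasDerivAt_id v).const_add 1)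
    simpa using h
  have hB : HasDerivAt (fun w : ℝ => (1 - w) ^ (-2 - c))
      ((-2 - c) * (1 - v) ^ (-2 - c - 1) * (-1)) v := by
    have h : HasDerivAt (fun w : ℝ => (1 - w) ^ (-2 - c)) _ v := (Real.hasDerivAt_rpow_const (x := 1 - v) (p := -2 - c)
      (Or.inl h2.ne')).comp v ((hasDerivAt_id v).const_sub 1)
    simpa using h
  have hn : HasDerivAt (fun w : ℝ => -(1 - m * w)) m v := by
    have h := ((hasDerivAt_id v).const_mul m).const_sub 1
    have h' : HasDerivAt (fun w : ℝ => -(1 - m * w)) _ v := h.neg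
    simpa using h'
  have hd : HasDerivAt (fun w : ℝ => σ ^ 2 * (1 - w ^ 2)) (σ ^ 2 * (-(2 * v))) v := by
    have h := ((hasDerivAt_pow 2 v).const_sub 1).const_mul (σ ^ 2)
    simpa using h
  have hdne : σ ^ 2 * (1 - v ^ 2) ≠ 0 := by positivity
  have hu : HasDerivAt (fun w : ℝ => -(1 - m * w) / (σ ^ 2 * (1 - w ^ 2)))
      ((m * (σ ^ 2 * (1 - v ^ 2)) - -(1 - m * v) * (σ ^ 2 * (-(2 * v)))) /
        (σ ^ 2 * (1 - v ^ 2)) ^ 2) v := hn.div hd hdne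
  have hE : HasDerivAt (fun w : ℝ => Real.exp (-(1 - m * w) / (σ ^ 2 * (1 - w ^ 2))))
      (Real.exp (-(1 - m * v) / (σ ^ 2 * (1 - v ^ 2))) *
        ((m * (σ ^ 2 * (1 - v ^ 2)) - -(1 - m * v) * (σ ^ 2 * (-(2 * v)))) /
          (σ ^ 2 * (1 - v ^ 2)) ^ 2)) v := hu.exp
  have hF : HasDerivAt (fun w : ℝ => ((1 - w ^ 2) ^ 2 : ℝ))
      (2 * (1 - v ^ 2) * (-(2 * v))) v := by
    have hinner : HasDerivAt (fun w : ℝ => 1 - w ^ 2) (-(2 * v)) v := by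
      have h := (hasDerivAt_pow 2 v).const_sub 1
      simpa using h
    have h : HasDerivAt (fun w : ℝ => (1 - w ^ 2) ^ 2) _ v := hinner.pow 2
    simpa [mul_comm, mul_assoc, mul_left_comm] using h
  have hfd : HasDerivAt f
      (((K * ((-2 + c) * (1 + v) ^ (-2 + c - 1)) * (1 - v) ^ (-2 - c) +
          (K * (1 + v) ^ (-2 + c)) * ((-2 - c) * (1 - v) ^ (-2 - c - 1) * (-1))) *
          Real.exp (-(1 - m * v) / (σ ^ 2 * (1 - v ^ 2))) +
        (K * (1 + v) ^ (-2 + c) * (1 - v) ^ (-2 - c)) *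
          (Real.exp (-(1 - m * v) / (σ ^ 2 * (1 - v ^ 2))) *
            ((m * (σ ^ 2 * (1 - v ^ 2)) - -(1 - m * v) * (σ ^ 2 * (-(2 * v)))) /
              (σ ^ 2 * (1 - v ^ 2)) ^ 2)))) v := by
    rw [hfe]
    exact ((hA.const_mul K).mul hB).mul hE
  have hprod : HasDerivAt (fun w => (1 - w ^ 2) ^ 2 * f w)
      (2 * (1 - v ^ 2) * (-(2 * v)) * f v + (1 - v ^ 2) ^ 2 *
        (((K * ((-2 + c) * (1 + v) ^ (-2 + c - 1)) * (1 - v) ^ (-2 - c) +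
          (K * (1 + v) ^ (-2 + c)) * ((-2 - c) * (1 - v) ^ (-2 - c - 1) * (-1))) *
          Real.exp (-(1 - m * v) / (σ ^ 2 * (1 - v ^ 2))) +
        (K * (1 + v) ^ (-2 + c) * (1 - v) ^ (-2 - c)) *
          (Real.exp (-(1 - m * v) / (σ ^ 2 * (1 - v ^ 2))) *
            ((m * (σ ^ 2 * (1 - v ^ 2)) - -(1 - m * v) * (σ ^ 2 * (-(2 * v)))) /
              (σ ^ 2 * (1 - v ^ 2)) ^ 2))))) v := hF.mul hfd
  rw [hprod.deriv]
  have ha1 : (1 + v) ^ (-2 + c - 1) = (1 + v) ^ (-2 + c) / (1 + v) := by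
    rw [Real.rpow_sub h1, Real.rpow_one]
  have hb1 : (1 - v) ^ (-2 - c - 1) = (1 - v) ^ (-2 - c) / (1 - v) := by
    rw [Real.rpow_sub h2, Real.rpow_one]
  rw [ha1, hb1, hf v]
  set a : ℝ := (1 + v) ^ (-2 + c)
  set b : ℝ := (1 - v) ^ (-2 - c)
  set e : ℝ := Real.exp (-(1 - m * v) / (σ ^ 2 * (1 - v ^ 2)))
  rw [hc]
  field_simp
  ring
end

section
/- Let σ > 0, let m̄ ∈ ℝ with |m̄| < 1, and define f∞ : (-1,1) → ℝ by f∞(v) = (1+v)^(−2+m̄/(2σ²))·(1−v)^(−2−m̄/(2σ²))·exp(−(1−m̄·v)/(σ²·(1−v²))). Then f∞(v) > 0 for every v ∈ (−1,1) and f∞ is integrable on (−1,1); consequently there exists a constant K∞ > 0 such that K∞·f∞ is a probability density on (−1,1). -/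
open Real MeasureTheory

lemma aux_bound (c δ : ℝ) (hδ : 0 < δ) :
    ∃ C : ℝ, 0 < C ∧ ∀ x ∈ Set.Ioo (0:ℝ) 2, x ^ c * Real.exp (-(δ/x)) ≤ C := by
  obtain ⟨n, hn⟩ := exists_nat_ge (-c)
  refine ⟨n.factorial * δ⁻¹^n * 2 ^ (c + n), by positivity, ?_⟩
  rintro x ⟨hx0, hx2⟩
  have hdx : 0 < δ / x := by positivity
  have h1 : Real.exp (-(δ/x)) ≤ n.factorial * (x/δ)^n := by
    rw [Real.exp_neg]
    have h2 : (δ/x)^n / n.factorial ≤ Real.exp (δ/x) :=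
      Real.pow_div_factorial_le_exp _ hdx.le n
    rw [inv_le_iff_one_le_mul₀ (Real.exp_pos _)]
    calc (1:ℝ) = ((δ/x)^n / n.factorial) * (n.factorial * (x/δ)^n) := by
          field_simp [Nat.factorial_ne_zero, hx0.ne', hδ.ne']
          rw [← mul_pow, div_mul_div_comm, mul_comm δ x, div_self (by positivity : x * δ ≠ 0), one_pow]
      _ ≤ Real.exp (δ/x) * (n.factorial * (x/δ)^n) := by
          apply mul_le_mul_of_nonneg_right h2
          positivity
      _ = n.factorial * (x/δ)^n * Real.exp (δ/x) := by ring
  calc x ^ c * Real.exp (-(δ/x)) ≤ x ^ c * (n.factorial * (x/δ)^n) := by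
        apply mul_le_mul_of_nonneg_left h1 (Real.rpow_nonneg hx0.le c)
    _ = n.factorial * δ⁻¹^n * (x ^ c * x ^ (n:ℝ)) := by
        rw [Real.rpow_natCast x n, div_pow]; ring
    _ = n.factorial * δ⁻¹^n * x ^ (c + n) := by
        rw [← Real.rpow_add hx0]
    _ ≤ n.factorial * δ⁻¹^n * 2 ^ (c + n) := by
        apply mul_le_mul_of_nonneg_left _ (by positivity)
        exact Real.rpow_le_rpow hx0.le hx2.le (by linarith)

/-- The stationary profile `f∞(v) = (1+v)^(−2+m̄/(2σ²)) (1−v)^(−2−m̄/(2σ²)) exp(−(1−m̄v)/(σ²(1−v²)))`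
is positive on `(−1,1)` and integrable there, hence can be normalized to a probability density. -/
theorem stationary_solution_positive_integrable
    (σ m : ℝ) (hσ : 0 < σ) (hm : |m| < 1) (f : ℝ → ℝ)
    (hf : ∀ v : ℝ, f v =
      (1 + v) ^ (-2 + m / (2 * σ ^ 2)) * (1 - v) ^ (-2 - m / (2 * σ ^ 2)) *
        Real.exp (-(1 - m * v) / (σ ^ 2 * (1 - v ^ 2)))) :
    (∀ v ∈ Set.Ioo (-1 : ℝ) 1, 0 < f v) ∧
    MeasureTheory.IntegrableOn f (Set.Ioo (-1 : ℝ) 1) ∧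
    ∃ K : ℝ, 0 < K ∧ ∫ v in Set.Ioo (-1 : ℝ) 1, K * f v = 1 := by
  have hpos : ∀ v ∈ Set.Ioo (-1 : ℝ) 1, 0 < f v := by
    rintro v ⟨hv1, hv2⟩
    rw [hf]
    have h1 : (0:ℝ) < 1 + v := by linarith
    have h2 : (0:ℝ) < 1 - v := by linarith
    positivity
  have hfm : Measurable f := by
    have : f = fun v => (1 + v) ^ (-2 + m / (2 * σ ^ 2)) * (1 - v) ^ (-2 - m / (2 * σ ^ 2)) *
        Real.exp (-(1 - m * v) / (σ ^ 2 * (1 - v ^ 2))) := funext hf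
    rw [this]
    fun_prop
  -- the bound
  set ε : ℝ := (1 - |m|) / σ ^ 2 with hεdef
  have hε : 0 < ε := by
    have : 0 < 1 - |m| := by linarith
    positivity
  obtain ⟨C₁, hC₁, hB₁⟩ := aux_bound (-2 + m / (2 * σ ^ 2)) (ε/2) (by positivity)
  obtain ⟨C₂, hC₂, hB₂⟩ := aux_bound (-2 - m / (2 * σ ^ 2)) (ε/2) (by positivity)
  have hbound : ∀ v ∈ Set.Ioo (-1 : ℝ) 1, f v ≤ C₁ * C₂ := by
    rintro v ⟨hv1, hv2⟩
    have h1 : (0:ℝ) < 1 + v := by linarith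
    have h2 : (0:ℝ) < 1 - v := by linarith
    have hmv : 1 - |m| ≤ 1 - m * v := by
      have : m * v ≤ |m| * |v| := by
        calc m * v ≤ |m * v| := le_abs_self _
          _ = |m| * |v| := abs_mul m v
      have hvle : |v| ≤ 1 := by rw [abs_le]; constructor <;> linarith
      nlinarith [abs_nonneg m]
    have hexp : Real.exp (-(1 - m * v) / (σ ^ 2 * (1 - v ^ 2))) ≤
        Real.exp (-(ε/2/(1+v))) * Real.exp (-(ε/2/(1-v))) := by
      rw [← Real.exp_add]
      apply Real.exp_le_exp.mpr
      have hv2pos : (0:ℝ) < 1 - v ^ 2 := by nlinarith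
      rw [div_le_iff₀ (by positivity : (0:ℝ) < σ ^ 2 * (1 - v ^ 2))] at *
      have key : (-(ε/2/(1+v)) + -(ε/2/(1-v))) * (σ ^ 2 * (1 - v ^ 2)) = -(1 - |m|) := by
        rw [hεdef]
        field_simp
        ring
      rw [key]
      linarith
    calc f v = ((1 + v) ^ (-2 + m / (2 * σ ^ 2)) * Real.exp (-(ε/2/(1+v)))) *
          ((1 - v) ^ (-2 - m / (2 * σ ^ 2)) * Real.exp (-(ε/2/(1-v)))) *
          (Real.exp (-(1 - m * v) / (σ ^ 2 * (1 - v ^ 2))) /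
            (Real.exp (-(ε/2/(1+v))) * Real.exp (-(ε/2/(1-v))))) := by
          rw [hf]
          field_simp [Real.exp_ne_zero]
      _ ≤ ((1 + v) ^ (-2 + m / (2 * σ ^ 2)) * Real.exp (-(ε/2/(1+v)))) *
          ((1 - v) ^ (-2 - m / (2 * σ ^ 2)) * Real.exp (-(ε/2/(1-v)))) * 1 := by
          apply mul_le_mul_of_nonneg_left
          · rw [div_le_one (by positivity)]; exact hexp
          · positivity
      _ = ((1 + v) ^ (-2 + m / (2 * σ ^ 2)) * Real.exp (-(ε/2/(1+v)))) *
          ((1 - v) ^ (-2 - m / (2 * σ ^ 2)) * Real.exp (-(ε/2/(1-v)))) := by ring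
      _ ≤ C₁ * C₂ := by
          apply mul_le_mul (hB₁ (1+v) ⟨h1, by linarith⟩) (hB₂ (1-v) ⟨h2, by linarith⟩)
            (by positivity) hC₁.le
  have hint : MeasureTheory.IntegrableOn f (Set.Ioo (-1 : ℝ) 1) := by
    apply MeasureTheory.Measure.integrableOn_of_bounded
      (by simp [Real.volume_Ioo] : volume (Set.Ioo (-1 : ℝ) 1) ≠ ⊤)
      hfm.aestronglyMeasurable
    filter_upwards [MeasureTheory.ae_restrict_mem measurableSet_Ioo] with v hv
    rw [Real.norm_of_nonneg (hpos v hv).le]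
    exact hbound v hv
  refine ⟨hpos, hint, ?_⟩
  have hIpos : 0 < ∫ v in Set.Ioo (-1 : ℝ) 1, f v := by
    apply (MeasureTheory.setIntegral_pos_iff_support_of_nonneg_ae ?_ hint).mpr
    · apply lt_of_lt_of_le _ (measure_mono (Set.subset_inter ?_ Set.Subset.rfl))
      · simp [Real.volume_Ioo]
      · intro v hv; exact (hpos v hv).ne'
    · filter_upwards [MeasureTheory.ae_restrict_mem measurableSet_Ioo] with v hv
      exact (hpos v hv).le
  refine ⟨(∫ v in Set.Ioo (-1 : ℝ) 1, f v)⁻¹, inv_pos.mpr hIpos, ?_⟩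
  rw [MeasureTheory.integral_const_mul]
  exact inv_mul_cancel₀ hIpos.ne'
end

section
/- Define δ : ℝ \ {0} → ℝ by δ(λ) = 1/λ + 1/(1 − e^λ). Then 0 < δ(λ) < 1 for every λ ≠ 0. -/
/-- The Chang–Cooper weight `δ(λ) = 1/λ + 1/(1 − e^λ)` satisfies `0 < δ(λ) < 1`
for every `λ ≠ 0`. -/
theorem chang_cooper_weight_bounds :
    ∀ l : ℝ, l ≠ 0 →
      0 < 1 / l + 1 / (1 - Real.exp l) ∧ 1 / l + 1 / (1 - Real.exp l) < 1 := by
  intro l hl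
  have h1 : l + 1 < Real.exp l := Real.add_one_lt_exp hl
  have h2 : -l + 1 < Real.exp (-l) := Real.add_one_lt_exp (neg_ne_zero.mpr hl)
  have hmul : Real.exp (-l) * Real.exp l = 1 := by
    rw [← Real.exp_add]; simp
  have hb : 1 - Real.exp l ≠ 0 := by
    intro h
    have h3 : Real.exp l = Real.exp 0 := by rw [Real.exp_zero]; linarith
    exact hl (Real.exp_injective h3)
  have hden : l * (1 - Real.exp l) < 0 := by
    rcases hl.lt_or_gt with h | h
    · have : Real.exp l < 1 := Real.exp_lt_one_iff.mpr h
      exact mul_neg_of_neg_of_pos h (by linarith)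
    · have : 1 < Real.exp l := by linarith
      exact mul_neg_of_pos_of_neg h (by linarith)
  have hnum2 : 0 < 1 - Real.exp l + l * Real.exp l := by
    nlinarith [Real.exp_pos l]
  constructor
  · have heq : 1 / l + 1 / (1 - Real.exp l)
        = (1 - Real.exp l + l) / (l * (1 - Real.exp l)) := by
      field_simp
    rw [heq]
    exact div_pos_of_neg_of_neg (by linarith) hden
  · have heq : 1 / l + 1 / (1 - Real.exp l) - 1
        = (1 - Real.exp l + l * Real.exp l) / (l * (1 - Real.exp l)) := by
      field_simp; ring
    have : 1 / l + 1 / (1 - Real.exp l) - 1 < 0 := by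
      rw [heq]; exact div_neg_of_pos_of_neg hnum2 hden
    linarith
end

section
/- Define δ̂ : ℝ → ℝ by δ̂(λ) = 1/λ + 1/(1 − e^λ) for λ ≠ 0 and δ̂(0) = 1/2. Then δ̂ is strictly decreasing on ℝ. -/
open Real Set

/-- The smooth (off-zero) formula for the Chang–Cooper weight. -/
private noncomputable def ccF (x : ℝ) : ℝ := 1 / x + 1 / (1 - Real.exp x)

private lemma one_sub_exp_ne {x : ℝ} (hx : x ≠ 0) : 1 - Real.exp x ≠ 0 := by
  intro h
  have : Real.exp x = 1 := by linarith
  exact hx (by simpa using this)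

private lemma ccF_hasDeriv {x : ℝ} (hx : x ≠ 0) :
    HasDerivAt ccF (-(1 / x ^ 2) + Real.exp x / (1 - Real.exp x) ^ 2) x := by
  have h1 : HasDerivAt (fun y : ℝ => 1 / y) (-(1 / x ^ 2)) x := by
    simpa [one_div] using hasDerivAt_inv hx
  have h2 : HasDerivAt (fun y : ℝ => 1 - Real.exp y) (-Real.exp x) x := by
    simpa using (Real.hasDerivAt_exp x).const_sub 1
  have h3 := h2.inv (one_sub_exp_ne hx)
  have h4 := h1.add h3
  have : (fun y : ℝ => 1 / y + (1 - Real.exp y)⁻¹) = ccF := by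
    funext y; simp [ccF, one_div]
  rw [show ((fun y : ℝ => 1 / y) + (fun y : ℝ => 1 - Real.exp y)⁻¹) = ccF from this] at h4
  refine h4.congr_deriv ?_
  ring

/-- Key inequality: `x² eˣ < (1 - eˣ)²` for `x ≠ 0`. -/
private lemma key_ineq {x : ℝ} (hx : x ≠ 0) :
    x ^ 2 * Real.exp x < (1 - Real.exp x) ^ 2 := by
  set t := x / 2 with ht
  have hts : (t : ℝ) ^ 2 < Real.sinh t ^ 2 := by
    rcases lt_or_gt_of_ne hx with h | h
    · have htneg : t < 0 := by simp [ht]; linarith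
      have : Real.sinh t < t := Real.sinh_lt_self_iff.mpr htneg
      nlinarith
    · have htpos : 0 < t := by simp [ht]; linarith
      have : t < Real.sinh t := Real.self_lt_sinh_iff.mpr htpos
      nlinarith
  have hE : Real.exp x - 1 = 2 * Real.sinh t * Real.exp t := by
    have h1 : Real.exp t * Real.exp t = Real.exp x := by
      rw [← Real.exp_add]; congr 1; rw [ht]; ring
    have h2 : Real.exp (-t) * Real.exp t = 1 := by
      rw [← Real.exp_add]; simp
    rw [Real.sinh_eq]
    nlinarith
  have hEt : (Real.exp t) ^ 2 = Real.exp x := by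
    rw [sq, ← Real.exp_add]; congr 1; rw [ht]; ring
  have hx2 : x ^ 2 = 4 * t ^ 2 := by rw [ht]; ring
  have hexp : (0 : ℝ) < Real.exp x := Real.exp_pos x
  nlinarith [sq_nonneg (Real.sinh t), Real.exp_pos t]

private lemma ccF_deriv_neg {x : ℝ} (hx : x ≠ 0) :
    -(1 / x ^ 2) + Real.exp x / (1 - Real.exp x) ^ 2 < 0 := by
  have h1 : (0 : ℝ) < x ^ 2 := by positivity
  have h2 : (0 : ℝ) < (1 - Real.exp x) ^ 2 := by
    have := one_sub_exp_ne hx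
    positivity
  have h3 := key_ineq hx
  have h4 : Real.exp x / (1 - Real.exp x) ^ 2 < 1 / x ^ 2 := by
    rw [div_lt_div_iff₀ h2 h1]
    nlinarith
  linarith

private lemma ccF_strictAntiOn_Ioi : StrictAntiOn ccF (Ioi (0 : ℝ)) := by
  apply strictAntiOn_of_deriv_neg (convex_Ioi 0)
  · exact fun x hx => ((ccF_hasDeriv (ne_of_gt hx)).continuousAt).continuousWithinAt
  · intro x hx
    rw [interior_Ioi] at hx
    rw [(ccF_hasDeriv (ne_of_gt hx)).deriv]
    exact ccF_deriv_neg (ne_of_gt hx)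

/-- Oddness: `ccF (-x) = 1 - ccF x` for `x ≠ 0`. -/
private lemma ccF_odd {x : ℝ} (hx : x ≠ 0) : ccF (-x) = 1 - ccF x := by
  have h1 : 1 - Real.exp x ≠ 0 := one_sub_exp_ne hx
  have h2 : 1 - Real.exp (-x) ≠ 0 := one_sub_exp_ne (neg_ne_zero.mpr hx)
  have h3 : Real.exp (-x) * Real.exp x = 1 := by rw [← Real.exp_add]; simp
  have he : Real.exp (-x) = (Real.exp x)⁻¹ := Real.exp_neg x
  have hx' : Real.exp x ≠ 0 := (Real.exp_pos x).ne'
  have hE1 : Real.exp x - 1 ≠ 0 := fun h => h1 (by linarith)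
  simp only [ccF]
  rw [he]
  field_simp [hx, hx', hE1]
  ring

/-- `sinh t < t cosh t` for `t > 0`. -/
private lemma sinh_lt_mul_cosh {t : ℝ} (ht : 0 < t) : Real.sinh t < t * Real.cosh t := by
  have hmono : StrictMonoOn (fun y : ℝ => y * Real.cosh y - Real.sinh y) (Ici (0 : ℝ)) := by
    apply strictMonoOn_of_deriv_pos (convex_Ici 0)
    · exact ((continuous_id.mul Real.continuous_cosh).sub Real.continuous_sinh).continuousOn
    · intro y hy
      rw [interior_Ici, mem_Ioi] at hy
      have hd : HasDerivAt (fun z : ℝ => z * Real.cosh z - Real.sinh z)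
          (1 * Real.cosh y + y * Real.sinh y - Real.cosh y) y :=
        ((hasDerivAt_id y).mul (Real.hasDerivAt_cosh y)).sub (Real.hasDerivAt_sinh y)
      rw [hd.deriv]
      have h5 : 0 < Real.sinh y := Real.sinh_pos_iff.mpr hy
      have h6 : 0 < Real.cosh y := Real.cosh_pos y
      simp only [id_eq, one_mul]
      nlinarith
  have := hmono (self_mem_Ici) (mem_Ici.mpr ht.le) ht
  simp at this
  linarith

/-- For `x > 0`, `(2 - x) eˣ < 2 + x`. -/
private lemma pade {x : ℝ} (hx : 0 < x) : (2 - x) * Real.exp x < 2 + x := by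
  set t := x / 2 with ht
  have htpos : 0 < t := by rw [ht]; linarith
  have h := sinh_lt_mul_cosh htpos
  have h1 : Real.exp t * Real.exp t = Real.exp x := by
    rw [← Real.exp_add]; congr 1; rw [ht]; ring
  have h2 : Real.exp (-t) * Real.exp t = 1 := by rw [← Real.exp_add]; simp
  rw [Real.sinh_eq, Real.cosh_eq] at h
  have hxt : x = 2 * t := by rw [ht]; ring
  nlinarith [mul_lt_mul_of_pos_right h (Real.exp_pos t), Real.exp_pos t, Real.exp_pos (-t)]

/-- For `x > 0`, `ccF x < 1/2`. -/
private lemma ccF_lt_half {x : ℝ} (hx : 0 < x) : ccF x < 1 / 2 := by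
  have hE : 1 < Real.exp x := by
    have : Real.exp 0 < Real.exp x := Real.exp_lt_exp.mpr hx
    simpa using this
  have h1 : 1 - Real.exp x ≠ 0 := by linarith
  have hp := pade hx
  have hnum : (1 : ℝ) / 2 - ccF x =
      ((2 + x) - (2 - x) * Real.exp x) / (2 * x * (Real.exp x - 1)) := by
    have hx0 : x ≠ 0 := ne_of_gt hx
    have hE1 : Real.exp x - 1 ≠ 0 := by linarith
    simp only [ccF]
    field_simp [hx0, hE1, h1]
    ring
  have : (1 : ℝ) / 2 - ccF x > 0 := by
    rw [hnum]
    apply div_pos (by linarith) (by nlinarith)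
  linarith

/-- The extended Chang–Cooper weight `δ̂`, with `δ̂(λ) = 1/λ + 1/(1 − e^λ)` for `λ ≠ 0`
and `δ̂(0) = 1/2`, is strictly decreasing on `ℝ`. -/
theorem chang_cooper_weight_strictAnti
    (d : ℝ → ℝ)
    (hd : ∀ l : ℝ, l ≠ 0 → d l = 1 / l + 1 / (1 - Real.exp l))
    (h0 : d 0 = 1 / 2) :
    StrictAnti d := by
  have hdf : ∀ l : ℝ, l ≠ 0 → d l = ccF l := fun l hl => hd l hl
  -- d on positives is < 1/2, on negatives > 1/2
  have hpos : ∀ x : ℝ, 0 < x → d x < 1 / 2 := fun x hx => by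
    rw [hdf x (ne_of_gt hx)]; exact ccF_lt_half hx
  have hneg : ∀ x : ℝ, x < 0 → 1 / 2 < d x := fun x hx => by
    rw [hdf x (ne_of_lt hx)]
    have h := ccF_lt_half (neg_pos.mpr hx)
    have ho := ccF_odd (x := -x) (ne_of_gt (neg_pos.mpr hx))
    rw [neg_neg] at ho
    rw [ho]
    linarith
  -- strict antitonicity on each open half line for d
  have hIoi : StrictAntiOn d (Ioi (0 : ℝ)) := fun a ha b hb hab => by
    rw [hdf a (ne_of_gt ha), hdf b (ne_of_gt hb)]
    exact ccF_strictAntiOn_Ioi ha hb hab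
  have hIio : StrictAntiOn d (Iio (0 : ℝ)) := fun a ha b hb hab => by
    rw [hdf a (ne_of_lt ha), hdf b (ne_of_lt hb)]
    have h1 := ccF_strictAntiOn_Ioi (mem_Ioi.mpr (neg_pos.mpr hb)) (mem_Ioi.mpr (neg_pos.mpr ha))
      (by linarith)
    have ha' := ccF_odd (x := -a) (ne_of_gt (neg_pos.mpr ha))
    have hb' := ccF_odd (x := -b) (ne_of_gt (neg_pos.mpr hb))
    rw [neg_neg] at ha' hb'
    rw [ha', hb']
    linarith
  intro a b hab
  rcases lt_trichotomy a 0 with ha | ha | ha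
  · rcases lt_trichotomy b 0 with hb | hb | hb
    · exact hIio ha hb hab
    · rw [hb, h0]; exact hneg a ha
    · have := hneg a ha
      have := hpos b hb
      linarith
  · rw [ha, h0]
    exact hpos b (ha ▸ hab)
  · exact hIoi ha (lt_trans ha hab) hab
end

section
/- Let λ ≠ 0, Δv > 0, D > 0 be real numbers, set δ = 1/λ + 1/(1 − e^λ) and A = λ·D/Δv, and let f₀, f₊ be real numbers with f₀ > 0. If the numerical flux vanishes, i.e. A·((1−δ)·f₊ + δ·f₀) + D·(f₊ − f₀)/Δv = 0, then f₊ = e^(−λ)·f₀. In particular the ratio of the discrete steady state across the interface is the exponential of (minus) the cell ratio λ of drift to diffusion. -/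
/-- Vanishing of the Chang–Cooper numerical flux implies that the ratio of the
discrete steady state across the interface is `e^(−λ)`. -/
theorem chang_cooper_discrete_steady_state
    (l dv D f0 fp : ℝ) (hl : l ≠ 0) (hdv : 0 < dv) (hD : 0 < D) (hf0 : 0 < f0)
    (δ A : ℝ)
    (hδ : δ = 1 / l + 1 / (1 - Real.exp l))
    (hA : A = l * D / dv)
    (hflux : A * ((1 - δ) * fp + δ * f0) + D * (fp - f0) / dv = 0) :
    fp = Real.exp (-l) * f0 := by
  have hE : (1 : ℝ) - Real.exp l ≠ 0 := by
    intro h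
    apply hl
    have : Real.exp l = 1 := by linarith
    simpa [Real.exp_eq_one_iff] using this
  have hEpos : (0:ℝ) < Real.exp l := Real.exp_pos l
  have hEne : Real.exp l ≠ 0 := ne_of_gt hEpos
  subst hδ hA
  have hdv' : dv ≠ 0 := ne_of_gt hdv
  have hD' : D ≠ 0 := ne_of_gt hD
  field_simp at hflux
  rw [Real.exp_neg, eq_comm, inv_mul_eq_div, div_eq_iff hEne]
  have key : D * dv * l ^ 2 * (f0 - Real.exp l * fp) = 0 := by
    linear_combination dv * l * hflux
  have h2 : f0 - Real.exp l * fp = 0 := by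
    have : D * dv * l ^ 2 ≠ 0 := by positivity
    exact (mul_eq_zero.mp key).resolve_left this
  linarith
end

section
/- Let μ > 0, ν > 0, ĉ > 0 and K > 0, and define on (0,∞) the drift h(c) = (μ/2)·ln(c/ĉ)·c, the diffusion coefficient D(c) = (ν²/2)·c², and the function f∞(c) = K·c^(−2)·exp((μ/(2ν²))·(ln(c/ĉ))²). Then f∞ satisfies the zero-flux stationary equation h(c)·f∞(c) − (d/dc)[D(c)·f∞(c)] = 0 for every c ∈ (0,∞). -/
/-- For the contact dynamics with drift `h(c) = (μ/2) ln(c/c₀) c` and diffusion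
`D(c) = (ν²/2) c²`, the function `f∞(c) = K c^(−2) exp((μ/(2ν²)) (ln(c/c₀))²)`
satisfies the zero-flux stationary equation `h f∞ − (D f∞)' = 0` on `(0,∞)`. -/
theorem contact_stationary_zero_flux
    (μ ν c₀ K : ℝ) (hμ : 0 < μ) (hν : 0 < ν) (hc₀ : 0 < c₀) (hK : 0 < K)
    (h D f : ℝ → ℝ)
    (hh : ∀ c : ℝ, h c = μ / 2 * Real.log (c / c₀) * c)
    (hD : ∀ c : ℝ, D c = ν ^ 2 / 2 * c ^ 2)
    (hf : ∀ c : ℝ, f c =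
      K * c ^ (-2 : ℝ) * Real.exp (μ / (2 * ν ^ 2) * Real.log (c / c₀) ^ 2)) :
    ∀ c ∈ Set.Ioi (0 : ℝ), h c * f c - deriv (fun s => D s * f s) c = 0 := by
  intro c hc
  rw [Set.mem_Ioi] at hc
  set a : ℝ := μ / (2 * ν ^ 2) with ha
  -- rpow to inverse
  have hrpow : ∀ s : ℝ, 0 < s → s ^ (-2 : ℝ) = (s ^ 2)⁻¹ := by
    intro s hs
    rw [show (-2 : ℝ) = -((2 : ℕ) : ℝ) by norm_num, Real.rpow_neg hs.le,
      Real.rpow_natCast]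
  -- D f agrees with F on Ioi 0
  have hEq : Set.EqOn (fun s => D s * f s)
      (fun s => ν ^ 2 / 2 * K * Real.exp (a * (Real.log s - Real.log c₀) ^ 2))
      (Set.Ioi 0) := by
    intro s hs
    rw [Set.mem_Ioi] at hs
    simp only [hD, hf, hrpow s hs, Real.log_div hs.ne' hc₀.ne']
    field_simp
  have hmem : Set.Ioi (0:ℝ) ∈ nhds c := (isOpen_Ioi).mem_nhds hc
  have hderiv_eq : deriv (fun s => D s * f s) c =
      deriv (fun s => ν ^ 2 / 2 * K * Real.exp (a * (Real.log s - Real.log c₀) ^ 2)) c :=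
    Filter.EventuallyEq.deriv_eq (Filter.eventuallyEq_of_mem hmem hEq)
  -- compute the derivative of F at c
  have h1 : HasDerivAt (fun s : ℝ => Real.log s - Real.log c₀) (c⁻¹) c :=
    (Real.hasDerivAt_log hc.ne').sub_const _
  have h2 : HasDerivAt (fun s : ℝ => a * (Real.log s - Real.log c₀) ^ 2)
      (a * (2 * (Real.log c - Real.log c₀) * (c⁻¹))) c :=
    ((h1.pow 2).const_mul a).congr_deriv (by ring)
  have h3 : HasDerivAt (fun s : ℝ => ν ^ 2 / 2 * K *
      Real.exp (a * (Real.log s - Real.log c₀) ^ 2))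
      (ν ^ 2 / 2 * K * (Real.exp (a * (Real.log c - Real.log c₀) ^ 2) *
        (a * (2 * (Real.log c - Real.log c₀) * (c⁻¹))))) c :=
    (h2.exp.const_mul _).congr_deriv (by ring)
  rw [hderiv_eq, h3.deriv, hh, hf, hrpow c hc, Real.log_div hc.ne' hc₀.ne', ha]
  field_simp
  ring
end
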